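/- Let q, η, μ₁, μ₂ ∈ ℂ∖{0} with q^k ≠ 1 and μ₂ ≠ q^k μ₁ for all integers k ≥ 1, and let (x;q)_k := ∏_{i=0}^{k−1}(1 − x q^i) denote the q-Pochhammer symbol. Define the formal power series F(z) = Σ_{k≥0} [ (η²;q)_k (η² μ₁/μ₂;q)_k / ( (q μ₁/μ₂;q)_k (q;q)_k ) ] (q η⁻² z)^k, the q-hypergeometric series ₂F₁(η², η²μ₁/μ₂; qμ₁/μ₂; q; qη⁻²z). Then, as an identity of formal power series in z: μ₁·(1 − η²z)·F(qz) + μ₂·(1 − η⁻²z)·F(z/q) = (μ₁ + μ₂)·(1 − z)·F(z). Equivalently, the vortex partition function of T[U(2)] satisfies μ₁η·((ητ₁ − η⁻¹τ₂)/(τ₁ − τ₂))·F(qz) + μ₂η⁻¹·((ητ₂ − η⁻¹τ₁)/(τ₂ − τ₁))·F(z/q) = (μ₁ + μ₂)·F(z) with z = τ₁/τ₂. -/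

import Mathlib

/-- The q-Pochhammer symbol `(x;q)_k = ∏_{i=0}^{k-1} (1 − x qⁱ)`. -/
noncomputable def qPoch (x q : ℂ) (k : ℕ) : ℂ :=
  ∏ i ∈ Finset.range k, (1 - x * q ^ i)

/-- The vortex partition function of `T[U(2)]`: the q-hypergeometric series
`₂F₁(η², η²μ₁/μ₂; qμ₁/μ₂; q; qη⁻²z)` as a formal power series in `z`. -/
noncomputable def tu2Vortex (q η μ₁ μ₂ : ℂ) : PowerSeries ℂ :=
  PowerSeries.mk fun k =>
    qPoch (η ^ 2) q k * qPoch (η ^ 2 * μ₁ / μ₂) q k /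
      (qPoch (q * μ₁ / μ₂) q k * qPoch q q k) * (q * (η ^ 2)⁻¹) ^ k

set_option maxHeartbeats 1000000 in
lemma qPoch_succ (x q : ℂ) (n : ℕ) :
    qPoch x q (n + 1) = qPoch x q n * (1 - x * q ^ n) := by
  simp [qPoch, Finset.prod_range_succ]

set_option maxHeartbeats 1000000 in
/-- The `T[U(2)]` vortex partition function satisfies the rank-1 quantized
trigonometric Ruijsenaars–Schneider difference equation
`μ₁ (1 − η²z) F(qz) + μ₂ (1 − η⁻²z) F(z/q) = (μ₁ + μ₂)(1 − z) F(z)`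
as an identity of formal power series in `z`. -/
theorem tu2_vortex_tRS_difference_equation (q η μ₁ μ₂ : ℂ) (hq0 : q ≠ 0)
    (hη : η ≠ 0) (hμ₁ : μ₁ ≠ 0) (hμ₂ : μ₂ ≠ 0)
    (hq1 : ∀ k : ℕ, 1 ≤ k → q ^ k ≠ 1)
    (hμ : ∀ k : ℕ, 1 ≤ k → μ₂ ≠ q ^ k * μ₁) :
    PowerSeries.C μ₁ * ((1 - PowerSeries.C (η ^ 2) * PowerSeries.X) *
        PowerSeries.rescale q (tu2Vortex q η μ₁ μ₂)) +
      PowerSeries.C μ₂ * ((1 - PowerSeries.C (η ^ 2)⁻¹ * PowerSeries.X) *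
        PowerSeries.rescale q⁻¹ (tu2Vortex q η μ₁ μ₂)) =
      PowerSeries.C (μ₁ + μ₂) * ((1 - PowerSeries.X) * tu2Vortex q η μ₁ μ₂) := by
  have hP3 : ∀ m : ℕ, qPoch (q * μ₁ / μ₂) q m ≠ 0 := by
    intro m
    refine Finset.prod_ne_zero_iff.2 fun i _ => ?_
    have hx := hμ (i + 1) (by omega)
    intro h
    apply hx
    have h2 : q * μ₁ / μ₂ * q ^ i = 1 := by linear_combination -h
    field_simp at h2
    rw [pow_succ, ← h2]; ring
  have hP4 : ∀ m : ℕ, qPoch q q m ≠ 0 := by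
    intro m
    refine Finset.prod_ne_zero_iff.2 fun i _ => ?_
    have hx := hq1 (i + 1) (by omega)
    intro h
    apply hx
    have h2 : q * q ^ i = 1 := by linear_combination -h
    rw [pow_succ, ← h2]; ring
  ext n
  simp only [map_add, PowerSeries.coeff_C_mul, sub_mul, one_mul, map_sub, mul_assoc,
    add_mul, PowerSeries.coeff_rescale]
  cases n with
  | zero =>
    simp [tu2Vortex]
  | succ n =>
    have hqn : (q : ℂ) ^ n ≠ 0 := pow_ne_zero _ hq0
    simp only [PowerSeries.coeff_succ_X_mul, PowerSeries.coeff_rescale, tu2Vortex,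
      PowerSeries.coeff_mk]
    have h1 :
        qPoch (η ^ 2) q (n + 1) * qPoch (η ^ 2 * μ₁ / μ₂) q (n + 1) * (q * (η ^ 2)⁻¹) ^ (n + 1) *
            ((1 - q * μ₁ / μ₂ * q ^ n) * (1 - q * q ^ n)) *
            (qPoch (q * μ₁ / μ₂) q n * qPoch q q n) =
        qPoch (η ^ 2) q n * qPoch (η ^ 2 * μ₁ / μ₂) q n * (q * (η ^ 2)⁻¹) ^ n *
            ((1 - η ^ 2 * q ^ n) * (1 - η ^ 2 * μ₁ / μ₂ * q ^ n) * (q * (η ^ 2)⁻¹)) *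
            (qPoch (q * μ₁ / μ₂) q (n + 1) * qPoch q q (n + 1)) := by
      rw [qPoch_succ, qPoch_succ, qPoch_succ, qPoch_succ, pow_succ]
      ring
    have hXE :
        (qPoch (η ^ 2) q (n + 1) * qPoch (η ^ 2 * μ₁ / μ₂) q (n + 1) /
              (qPoch (q * μ₁ / μ₂) q (n + 1) * qPoch q q (n + 1)) * (q * (η ^ 2)⁻¹) ^ (n + 1)) *
            (qPoch (q * μ₁ / μ₂) q (n + 1) * qPoch q q (n + 1)) =
          qPoch (η ^ 2) q (n + 1) * qPoch (η ^ 2 * μ₁ / μ₂) q (n + 1) *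
            (q * (η ^ 2)⁻¹) ^ (n + 1) := by
      rw [div_mul_eq_mul_div, div_mul_cancel₀ _ (mul_ne_zero (hP3 (n + 1)) (hP4 (n + 1)))]
    have hYF :
        (qPoch (η ^ 2) q n * qPoch (η ^ 2 * μ₁ / μ₂) q n /
              (qPoch (q * μ₁ / μ₂) q n * qPoch q q n) * (q * (η ^ 2)⁻¹) ^ n) *
            (qPoch (q * μ₁ / μ₂) q n * qPoch q q n) =
          qPoch (η ^ 2) q n * qPoch (η ^ 2 * μ₁ / μ₂) q n * (q * (η ^ 2)⁻¹) ^ n := by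
      rw [div_mul_eq_mul_div, div_mul_cancel₀ _ (mul_ne_zero (hP3 n) (hP4 n))]
    have hXY :
        (qPoch (η ^ 2) q (n + 1) * qPoch (η ^ 2 * μ₁ / μ₂) q (n + 1) /
              (qPoch (q * μ₁ / μ₂) q (n + 1) * qPoch q q (n + 1)) * (q * (η ^ 2)⁻¹) ^ (n + 1)) *
            ((1 - q * μ₁ / μ₂ * q ^ n) * (1 - q * q ^ n)) =
          (qPoch (η ^ 2) q n * qPoch (η ^ 2 * μ₁ / μ₂) q n /
              (qPoch (q * μ₁ / μ₂) q n * qPoch q q n) * (q * (η ^ 2)⁻¹) ^ n) *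
            ((1 - η ^ 2 * q ^ n) * (1 - η ^ 2 * μ₁ / μ₂ * q ^ n) * (q * (η ^ 2)⁻¹)) := by
      apply mul_right_cancel₀
        (b := (qPoch (q * μ₁ / μ₂) q (n + 1) * qPoch q q (n + 1)) *
          (qPoch (q * μ₁ / μ₂) q n * qPoch q q n))
        (mul_ne_zero (mul_ne_zero (hP3 (n + 1)) (hP4 (n + 1)))
          (mul_ne_zero (hP3 n) (hP4 n)))
      linear_combination
        ((1 - q * μ₁ / μ₂ * q ^ n) * (1 - q * q ^ n) *
            (qPoch (q * μ₁ / μ₂) q n * qPoch q q n)) * hXE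
        + h1
        - ((1 - η ^ 2 * q ^ n) * (1 - η ^ 2 * μ₁ / μ₂ * q ^ n) * (q * (η ^ 2)⁻¹) *
            (qPoch (q * μ₁ / μ₂) q (n + 1) * qPoch q q (n + 1))) * hYF
    have e1 : q ^ (n + 1) * q⁻¹ ^ (n + 1) = 1 := by
      rw [← mul_pow, mul_inv_cancel₀ hq0, one_pow]
    have e2 : q ^ n * q⁻¹ ^ n = 1 := by
      rw [← mul_pow, mul_inv_cancel₀ hq0, one_pow]
    have e3 : η ^ 2 * (η ^ 2)⁻¹ = 1 := mul_inv_cancel₀ (pow_ne_zero _ hη)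
    have e4 : μ₂ * μ₂⁻¹ = 1 := mul_inv_cancel₀ hμ₂
    linear_combination (q⁻¹ ^ n * q⁻¹ * μ₂) * hXY
      + ((qPoch (η ^ 2) q (n + 1) * qPoch (η ^ 2 * μ₁ / μ₂) q (n + 1) /
              (qPoch (q * μ₁ / μ₂) q (n + 1) * qPoch q q (n + 1)) * (q * (η ^ 2)⁻¹) ^ (n + 1)) *
            (μ₁ * μ₂ * μ₂⁻¹ + μ₂ - μ₁ * μ₂ * μ₂⁻¹ * q * q ^ n) +
          (qPoch (η ^ 2) q n * qPoch (η ^ 2 * μ₁ / μ₂) q n /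
              (qPoch (q * μ₁ / μ₂) q n * qPoch q q n) * (q * (η ^ 2)⁻¹) ^ n) *
            (μ₂ * (η ^ 2)⁻¹ * q⁻¹ ^ n - μ₂ * (η ^ 2)⁻¹ * η ^ 2 - μ₁ * μ₂ * μ₂⁻¹ * (η ^ 2)⁻¹ * η ^ 2
              + μ₁ * μ₂ * μ₂⁻¹ * (η ^ 2)⁻¹ * η ^ 2 * η ^ 2 * q ^ n)) * e1
      - (μ₂ * (η ^ 2)⁻¹ * q⁻¹ ^ n * q * q⁻¹ *
          (qPoch (η ^ 2) q n * qPoch (η ^ 2 * μ₁ / μ₂) q n /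
              (qPoch (q * μ₁ / μ₂) q n * qPoch q q n) * (q * (η ^ 2)⁻¹) ^ n)) * e2
      + ((qPoch (η ^ 2) q n * qPoch (η ^ 2 * μ₁ / μ₂) q n /
              (qPoch (q * μ₁ / μ₂) q n * qPoch q q n) * (q * (η ^ 2)⁻¹) ^ n) *
            (-μ₂ - μ₁ * μ₂ * μ₂⁻¹ + μ₁ * μ₂ * μ₂⁻¹ * η ^ 2 * q ^ n)) * e3
      + (μ₁ * (1 - q * q ^ n) *
            (qPoch (η ^ 2) q (n + 1) * qPoch (η ^ 2 * μ₁ / μ₂) q (n + 1) /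
              (qPoch (q * μ₁ / μ₂) q (n + 1) * qPoch q q (n + 1)) * (q * (η ^ 2)⁻¹) ^ (n + 1)) +
          μ₁ * (η ^ 2 * q ^ n - 1) *
            (qPoch (η ^ 2) q n * qPoch (η ^ 2 * μ₁ / μ₂) q n /
              (qPoch (q * μ₁ / μ₂) q n * qPoch q q n) * (q * (η ^ 2)⁻¹) ^ n)) * e4
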